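/- For A a flanked presheaf on Ξ, the unit η_A : A → u*i*A of the adjunction i* ⊣ u* — the map whose component in degree n is the composite s_{⊤+1} ∘ s_{⊥−1} : A_n → A_{n+2} of extra outer degeneracy maps — is a cartesian map of presheaves on Ξ. -/

import Mathlib

open CategoryTheory Opposite

namespace DS3

/-! ## The simplex category Δ: generic and free maps, decomposition spaces -/

/-- A morphism of the simplex category is *generic* (endpoint-preserving) if it preserves
the bottom and the top element. -/
def IsGeneric {m n : SimplexCategory} (a : m ⟶ n) : Prop :=
  a.toOrderHom 0 = 0 ∧ a.toOrderHom (Fin.last m.len) = Fin.last n.len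

/-- A morphism of the simplex category is *free* (distance-preserving) if
`a (i+1) = a i + 1`. -/
def IsFree {m n : SimplexCategory} (a : m ⟶ n) : Prop :=
  ∀ i : Fin m.len, (a.toOrderHom i.succ : ℕ) = (a.toOrderHom i.castSucc : ℕ) + 1

/-- A simplicial set is a *decomposition space* if it sends every pushout in `Δ` of a
generic map along a free map to a pullback of sets. -/
def IsDecomposition (X : SimplexCategoryᵒᵖ ⥤ Type) : Prop :=
  ∀ {a b c d : SimplexCategory} (g : a ⟶ b) (f : a ⟶ c) (f' : b ⟶ d) (g' : c ⟶ d),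
    IsGeneric g → IsFree f → IsPushout g f f' g' →
    IsPullback (X.map f'.op) (X.map g'.op) (X.map g.op) (X.map f.op)

/-- A simplicial map is *cULF* if its naturality squares at all generic maps are
pullbacks. -/
def IsCULF {Y X : SimplexCategoryᵒᵖ ⥤ Type} (α : Y ⟶ X) : Prop :=
  ∀ {m n : SimplexCategory} (g : m ⟶ n), IsGeneric g →
    IsPullback (α.app (op n)) (Y.map g.op) (X.map g.op) (α.app (op m))

/-! ## The category Ξ of finite strict intervals -/

/-- Objects of the category `Ξ` of finite strict intervals: `⟨t⟩` stands for the finite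
linear order `Fin (t+2)` with (distinct) bottom element `0` and top element `t+1`.
In the indexing of the paper, `⟨t⟩` is the object `[t-1]`; thus `⟨0⟩ = [-1]`. -/
@[ext] structure IntervalCat : Type where
  /-- the number of non-endpoint elements -/
  len : ℕ

namespace IntervalCat

/-- Morphisms of `Ξ`: order-preserving maps preserving the bottom and the top element. -/
@[ext] structure Hom (a b : IntervalCat) : Type where
  toOrderHom : Fin (a.len + 2) →o Fin (b.len + 2)
  map_bot : toOrderHom 0 = 0
  map_top : toOrderHom (Fin.last (a.len + 1)) = Fin.last (b.len + 1)

instance : Category IntervalCat where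
  Hom := Hom
  id a := ⟨OrderHom.id, rfl, rfl⟩
  comp f g := ⟨g.toOrderHom.comp f.toOrderHom,
    by simp [f.map_bot, g.map_bot], by simp [f.map_top, g.map_top]⟩
  id_comp f := Hom.ext rfl
  comp_id f := Hom.ext rfl
  assoc f g h := Hom.ext rfl

end IntervalCat

/-- The coface map `⟨t⟩ ⟶ ⟨t+1⟩` of `Ξ` skipping the non-endpoint element `i+1`
(for `i ≤ t`; out of this range the index is clamped).  Under a presheaf `A` on `Ξ` it
induces the face map `d_i : A_n → A_{n-1}` (paper indexing `n = t-1`); for `t = i = 0` it is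
the extra outer coface `[-1] → [0]`, inducing `A_0 → A_{-1}`. -/
def xiFace (t i : ℕ) : IntervalCat.mk t ⟶ IntervalCat.mk (t + 1) where
  toOrderHom :=
    { toFun := fun x =>
        ⟨if (x : ℕ) < min (i + 1) (t + 1) then (x : ℕ) else (x : ℕ) + 1, by
          have := x.isLt
          dsimp only at this ⊢
          split <;> omega⟩
      monotone' := by
        intro x y hxy
        have hxy' : (x : ℕ) ≤ (y : ℕ) := hxy
        simp only [Fin.mk_le_mk]
        split <;> split <;> omega }
  map_bot := by
    apply Fin.ext
    simp only [OrderHom.coe_mk, Fin.val_zero]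
    simp
  map_top := by
    apply Fin.ext
    simp only [OrderHom.coe_mk, Fin.val_last]
    split <;> omega

/-- The codegeneracy map `⟨t+1⟩ ⟶ ⟨t⟩` of `Ξ` collapsing the pair `(j, j+1)` onto `j`
(for `j ≤ t+1`; out of this range the index is clamped).  For `j = 0` this is the extra
bottom codegeneracy (inducing `s_{⊥-1} : A_n → A_{n+1}`, paper indexing `n = t-1`), for
`j = t+1` the extra top codegeneracy (inducing `s_{⊤+1}`), and for `1 ≤ j ≤ t` the ordinary
codegeneracy `σ_{j-1}` (inducing `s_{j-1}`). -/
def xiSigma (t j : ℕ) : IntervalCat.mk (t + 1) ⟶ IntervalCat.mk t where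
  toOrderHom :=
    { toFun := fun x =>
        ⟨if (x : ℕ) ≤ min j (t + 1) then (x : ℕ) else (x : ℕ) - 1, by
          have := x.isLt
          dsimp only at this ⊢
          split <;> omega⟩
      monotone' := by
        intro x y hxy
        have hxy' : (x : ℕ) ≤ (y : ℕ) := hxy
        simp only [Fin.mk_le_mk]
        split <;> split <;> omega }
  map_bot := by
    apply Fin.ext
    simp only [OrderHom.coe_mk, Fin.val_zero]
    simp
  map_top := by
    apply Fin.ext
    simp only [OrderHom.coe_mk, Fin.val_last]
    split <;> omega

/-! ## The functors `u : Ξ ⥤ Δ` and `i : Δ ⥤ Ξ` -/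

/-- The forgetful functor `u : Ξ ⥤ Δ`, forgetting that the endpoints are distinguished:
`u ⟨t⟩ = [t+1]`. -/
def uF : IntervalCat ⥤ SimplexCategory where
  obj a := SimplexCategory.mk (a.len + 1)
  map f := SimplexCategory.mkHom f.toOrderHom
  map_id _ := rfl
  map_comp _ _ := rfl

/-- The underlying map of `i f`: extend `f` by a new bottom and a new top element. -/
def iObjMap {m n : ℕ} (f : Fin (m + 1) →o Fin (n + 1)) : Fin (m + 3) →o Fin (n + 3) where
  toFun x :=
    if (x : ℕ) = 0 then 0
    else if h : m + 2 ≤ (x : ℕ) then Fin.last (n + 2)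
    else ⟨(f ⟨(x : ℕ) - 1, by omega⟩ : ℕ) + 1, by
      have := (f ⟨(x : ℕ) - 1, by omega⟩).isLt; omega⟩
  monotone' := by
    intro x y hxy
    have hxy' : (x : ℕ) ≤ (y : ℕ) := hxy
    dsimp only
    by_cases h1 : (x : ℕ) = 0
    · simp only [if_pos h1]
      exact Fin.zero_le _
    · rw [if_neg h1]
      have hy1 : ¬ (y : ℕ) = 0 := by omega
      rw [if_neg hy1]
      by_cases h2 : m + 2 ≤ (x : ℕ)
      · rw [dif_pos h2, dif_pos (by omega : m + 2 ≤ (y : ℕ))]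
      · rw [dif_neg h2]
        by_cases h3 : m + 2 ≤ (y : ℕ)
        · rw [dif_pos h3]
          exact Fin.le_last _
        · rw [dif_neg h3]
          simp only [Fin.mk_le_mk]
          have : (⟨(x : ℕ) - 1, by omega⟩ : Fin (m + 1)) ≤ ⟨(y : ℕ) - 1, by omega⟩ := by
            simp only [Fin.mk_le_mk]; omega
          exact Nat.add_le_add_right (f.monotone this) 1

theorem iObjMap_bot {m n : ℕ} (f : Fin (m + 1) →o Fin (n + 1)) : iObjMap f 0 = 0 := by
  simp [iObjMap]

theorem iObjMap_top {m n : ℕ} (f : Fin (m + 1) →o Fin (n + 1)) :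
    iObjMap f (Fin.last (m + 2)) = Fin.last (n + 2) := by
  simp [iObjMap]

theorem iObjMap_id (m : ℕ) :
    iObjMap (OrderHom.id : Fin (m + 1) →o Fin (m + 1)) = OrderHom.id := by
  apply OrderHom.ext
  funext j
  apply Fin.ext
  have hj := j.isLt
  simp only [iObjMap, OrderHom.coe_mk, OrderHom.id_coe, id_eq]
  split_ifs with h1 h2 <;> simp <;> omega

theorem iObjMap_comp {m p n : ℕ} (f : Fin (m + 1) →o Fin (p + 1))
    (g : Fin (p + 1) →o Fin (n + 1)) :
    iObjMap (g.comp f) = (iObjMap g).comp (iObjMap f) := by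
  apply OrderHom.ext
  funext j
  apply Fin.ext
  have hj := j.isLt
  have e : ∀ {a b : ℕ} (h : Fin (a + 1) →o Fin (b + 1)) (x : Fin (a + 3)), iObjMap h x =
      if (x : ℕ) = 0 then 0 else if h' : a + 2 ≤ (x : ℕ) then Fin.last (b + 2)
      else ⟨(h ⟨(x : ℕ) - 1, by omega⟩ : ℕ) + 1, by
        have := (h ⟨(x : ℕ) - 1, by omega⟩).isLt; omega⟩ := fun _ _ => rfl
  simp only [e, OrderHom.comp_coe, Function.comp_apply]
  by_cases h1 : (j : ℕ) = 0
  · simp [h1]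
  · by_cases h2 : m + 2 ≤ (j : ℕ)
    · simp only [if_neg h1, dif_pos h2]
      rw [if_neg (by simp), dif_pos (by simp)]
    · simp only [if_neg h1, dif_neg h2]
      have hb := (f ⟨(j : ℕ) - 1, by omega⟩).isLt
      rw [if_neg (by simp), dif_neg (by simp; omega)]
      show _ = ((g ⟨(f ⟨(j : ℕ) - 1, by omega⟩ : ℕ) + 1 - 1, by omega⟩ : Fin (n + 1)) : ℕ) + 1
      congr 2

/-- The functor `i : Δ ⥤ Ξ` adjoining a new bottom and a new top element:
`i [n] = ⟨n+1⟩`. -/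
def iF : SimplexCategory ⥤ IntervalCat where
  obj x := ⟨x.len + 1⟩
  map f := ⟨iObjMap f.toOrderHom, iObjMap_bot _, iObjMap_top _⟩
  map_id x := IntervalCat.Hom.ext (iObjMap_id x.len)
  map_comp f g := IntervalCat.Hom.ext (iObjMap_comp f.toOrderHom g.toOrderHom)

/-! ## Presheaves on Ξ -/

/-- Restriction of a simplicial set along `u` (the functor `u*`). -/
def uStar (X : SimplexCategoryᵒᵖ ⥤ Type) : IntervalCatᵒᵖ ⥤ Type := uF.op ⋙ X

/-- Restriction of a presheaf on `Ξ` along `i` (the functor `i*`, taking underlying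
simplicial sets). -/
def iStar (A : IntervalCatᵒᵖ ⥤ Type) : SimplexCategoryᵒᵖ ⥤ Type := iF.op ⋙ A

/-- A map of presheaves on `Ξ` is *cartesian* if all its naturality squares are
pullbacks. -/
def IsCartesianXi {A B : IntervalCatᵒᵖ ⥤ Type} (α : A ⟶ B) : Prop :=
  ∀ ⦃c c' : IntervalCatᵒᵖ⦄ (φ : c ⟶ c'),
    IsPullback (α.app c) (A.map φ) (B.map φ) (α.app c')

/-- A presheaf `A` on `Ξ` is *flanked* if the extra outer degeneracy maps form cartesian
squares with the opposite outer face maps: for all `n ≥ 0` the squares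

`A_{n-1} ←d⊤− A_n`         `A_{n-1} ←d⊥− A_n`
`  s⊥↓        ↓s⊥`   and   `  s⊤↓        ↓s⊤`
`A_n  ←d⊤−  A_{n+1}`       `A_n  ←d⊥−  A_{n+1}`

are pullbacks (where `A_n := A(⟨n+1⟩)` in paper degree indexing, `d⊤` is the top face map,
`d⊥` the bottom face map, and for `n = 0` both are the extra outer face map
`A_0 → A_{-1}`). -/
def Flanked (A : IntervalCatᵒᵖ ⥤ Type) : Prop :=
  ∀ n : ℕ,
    IsPullback (A.map (xiFace n n).op) (A.map (xiSigma (n + 1) 0).op)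
      (A.map (xiSigma n 0).op) (A.map (xiFace (n + 1) (n + 1)).op) ∧
    IsPullback (A.map (xiFace n 0).op) (A.map (xiSigma (n + 1) (n + 2)).op)
      (A.map (xiSigma n (n + 1)).op) (A.map (xiFace (n + 1) 0).op)

lemma xiSigma_val (t j : ℕ) (x : Fin (t + 3)) :
    ((xiSigma t j).toOrderHom x : ℕ)
      = if (x : ℕ) ≤ min j (t + 1) then (x : ℕ) else (x : ℕ) - 1 := rfl

lemma iObjMap_val {m n : ℕ} (f : Fin (m + 1) →o Fin (n + 1)) (x : Fin (m + 3)) :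
    (iObjMap f x : ℕ)
      = if (x : ℕ) = 0 then 0
        else if h : m + 2 ≤ (x : ℕ) then n + 2
        else (f ⟨(x : ℕ) - 1, by omega⟩ : ℕ) + 1 := by
  simp only [iObjMap, OrderHom.coe_mk]
  split_ifs <;> simp_all

theorem nu_natural {a b : IntervalCat} (f : a ⟶ b) :
    (xiSigma (a.len + 1) (a.len + 2) ≫ xiSigma a.len 0) ≫ f
      = iF.map (uF.map f) ≫ (xiSigma (b.len + 1) (b.len + 2) ≫ xiSigma b.len 0) := by
  apply IntervalCat.Hom.ext
  apply OrderHom.ext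
  funext x
  apply Fin.ext
  have hx : (x : ℕ) < a.len + 4 := x.isLt
  have hfb := f.map_bot
  have hft := f.map_top
  have hfl := fun z : Fin (a.len + 2) => (f.toOrderHom z).isLt
  show (f.toOrderHom ((xiSigma a.len 0).toOrderHom ((xiSigma (a.len + 1) (a.len + 2)).toOrderHom x)) : ℕ)
      = ((xiSigma b.len 0).toOrderHom ((xiSigma (b.len + 1) (b.len + 2)).toOrderHom
          (iObjMap f.toOrderHom x)) : ℕ)
  rw [xiSigma_val, xiSigma_val, iObjMap_val]
  by_cases h0 : (x : ℕ) = 0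
  · have harg : (xiSigma a.len 0).toOrderHom ((xiSigma (a.len + 1) (a.len + 2)).toOrderHom x)
        = 0 := by
      apply Fin.ext
      rw [xiSigma_val, xiSigma_val]
      simp only [Fin.val_zero]
      split_ifs <;> omega
    rw [harg, hfb]
    simp [h0]
  · by_cases htop : (x : ℕ) = a.len + 3
    · have harg : (xiSigma a.len 0).toOrderHom ((xiSigma (a.len + 1) (a.len + 2)).toOrderHom x)
          = Fin.last (a.len + 1) := by
        apply Fin.ext
        rw [xiSigma_val, xiSigma_val]
        simp only [Fin.val_last]
        split_ifs <;> omega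
      rw [harg, hft]
      rw [if_neg h0, dif_pos (by omega : a.len + 1 + 2 ≤ (x : ℕ))]
      simp only [Fin.val_last]
      split_ifs <;> omega
    · have harg : (xiSigma a.len 0).toOrderHom ((xiSigma (a.len + 1) (a.len + 2)).toOrderHom x)
          = ⟨(x : ℕ) - 1, by show (x : ℕ) - 1 < a.len + 2; omega⟩ := by
        apply Fin.ext
        rw [xiSigma_val, xiSigma_val]
        dsimp only
        split_ifs <;> omega
      rw [harg]
      rw [if_neg h0, dif_neg (by omega : ¬ a.len + 1 + 2 ≤ (x : ℕ))]
      simp only [show b.len + 1 + 1 = b.len + 2 from rfl, min_self, Nat.zero_min]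
      rw [if_pos (Nat.succ_le_succ (Fin.is_le _)), if_neg (by simp)]
      simp only [Nat.add_sub_cancel]

/-- The unit `η_A : A ⟶ u*i*A` of the adjunction `i* ⊣ u*`: its component in degree `n`
is the composite `s_{⊤+1} ∘ s_{⊥-1} : A_n → A_{n+2}` of the two extra outer degeneracy
maps. -/
def unitNT (A : IntervalCatᵒᵖ ⥤ Type) : A ⟶ uStar (iStar A) where
  app c := A.map (xiSigma c.unop.len 0).op ≫
    A.map (xiSigma (c.unop.len + 1) (c.unop.len + 2)).op
  naturality {c c'} φ := by
    have h := congrArg (fun f => A.map f.op) (nu_natural φ.unop)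
    simp only [op_comp, A.map_comp, Quiver.Hom.op_unop, Category.assoc] at h
    refine h.trans ?_
    erw [op_comp, op_comp, A.map_comp, A.map_comp]
    rfl


/-! ## Auxiliary machinery for the proof of STATEMENT 15 -/

section UnitCartesianAux

open IntervalCat

lemma xiFace_val (t i : ℕ) (x : Fin (t + 2)) :
    ((xiFace t i).toOrderHom x : ℕ)
      = if (x : ℕ) < min (i + 1) (t + 1) then (x : ℕ) else (x : ℕ) + 1 := rfl

lemma comp_toOrderHom_apply {a b c : IntervalCat} (f : a ⟶ b) (g : b ⟶ c)
    (z : Fin (a.len + 2)) :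
    (f ≫ g).toOrderHom z = g.toOrderHom (f.toOrderHom z) := rfl

lemma id_toOrderHom_apply (a : IntervalCat) (z : Fin (a.len + 2)) :
    (𝟙 a : a ⟶ a).toOrderHom z = z := rfl

lemma homext {a b : IntervalCat} {f g : a ⟶ b}
    (h : ∀ z : Fin (a.len + 2), ((f.toOrderHom z : Fin (b.len + 2)) : ℕ)
        = (g.toOrderHom z : ℕ)) : f = g :=
  IntervalCat.Hom.ext (OrderHom.ext _ _ (funext fun z => Fin.ext (h z)))

lemma hom_bot_val {a b : IntervalCat} (f : a ⟶ b) :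
    ((f.toOrderHom 0 : Fin (b.len + 2)) : ℕ) = 0 := by
  rw [f.map_bot]; simp

lemma hom_top_val {a b : IntervalCat} (f : a ⟶ b) :
    ((f.toOrderHom (Fin.last (a.len + 1)) : Fin (b.len + 2)) : ℕ) = b.len + 1 := by
  rw [f.map_top]; simp

/-! Basic cosimplicial-type identities in `Ξ`. -/

lemma xiE0 (t : ℕ) :
    xiSigma (t+1) (t+2) ≫ xiSigma t 0 = xiSigma (t+1) 0 ≫ xiSigma t (t+1) := by
  apply homext; intro z
  have hz : (z : ℕ) < t + 4 := z.isLt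
  simp only [comp_toOrderHom_apply, xiSigma_val]
  split_ifs <;> omega

lemma xiE1 (t i : ℕ) (h : i ≤ t) :
    xiFace t i ≫ xiFace (t+1) (t+1) = xiFace t t ≫ xiFace (t+1) i := by
  apply homext; intro z
  have hz : (z : ℕ) < t + 2 := z.isLt
  simp only [comp_toOrderHom_apply, xiFace_val]
  split_ifs <;> omega

lemma xiE2 (t i : ℕ) (h : i ≤ t) :
    xiFace t i ≫ xiFace (t+1) 0 = xiFace t 0 ≫ xiFace (t+1) (i+1) := by
  apply homext; intro z
  have hz : (z : ℕ) < t + 2 := z.isLt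
  simp only [comp_toOrderHom_apply, xiFace_val]
  split_ifs <;> omega

lemma xiE5 (t : ℕ) :
    xiFace (t+1) (t+1) ≫ xiSigma (t+1) 0 = xiSigma t 0 ≫ xiFace t t := by
  apply homext; intro z
  have hz : (z : ℕ) < t + 3 := z.isLt
  simp only [comp_toOrderHom_apply, xiFace_val, xiSigma_val]
  split_ifs <;> omega

lemma xiE6 (t : ℕ) :
    xiFace (t+1) 0 ≫ xiSigma (t+1) (t+2) = xiSigma t (t+1) ≫ xiFace t 0 := by
  apply homext; intro z
  have hz : (z : ℕ) < t + 3 := z.isLt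
  simp only [comp_toOrderHom_apply, xiFace_val, xiSigma_val]
  split_ifs <;> omega

/-- `xiFace p (min c p)` (skipping `c+1`) is a section of `xiSigma p c`. -/
lemma xiSec (p c : ℕ) : xiFace p (min c p) ≫ xiSigma p c = 𝟙 (IntervalCat.mk p) := by
  apply homext; intro z
  have hz : (z : ℕ) < p + 2 := z.isLt
  simp only [comp_toOrderHom_apply, xiFace_val, xiSigma_val, id_toOrderHom_apply]
  split_ifs <;> omega

/-- `xiFace p (c-1)` (skipping `max c 1`) is a section of `xiSigma p c`. -/
lemma xiSec' (p c : ℕ) : xiFace p (c - 1) ≫ xiSigma p c = 𝟙 (IntervalCat.mk p) := by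
  apply homext; intro z
  have hz : (z : ℕ) < p + 2 := z.isLt
  simp only [comp_toOrderHom_apply, xiFace_val, xiSigma_val, id_toOrderHom_apply]
  split_ifs <;> omega

/-- Factorization through the extra bottom codegeneracy. -/
lemma facBot {a : ℕ} {b : IntervalCat} (k : IntervalCat.mk (a+1) ⟶ b)
    (h : ((k.toOrderHom (⟨1, by omega⟩ : Fin (a+3)) : Fin (b.len + 2)) : ℕ) = 0) :
    k = xiSigma a 0 ≫ (xiFace a 0 ≫ k) := by
  apply homext; intro z
  simp only [comp_toOrderHom_apply]
  have hz : (z : ℕ) < a + 3 := z.isLt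
  have key : ((xiFace a 0).toOrderHom ((xiSigma a 0).toOrderHom z) : ℕ) = (z : ℕ)
      ∨ ((z : ℕ) = 1 ∧ ((xiFace a 0).toOrderHom ((xiSigma a 0).toOrderHom z) : ℕ) = 0) := by
    rw [xiFace_val, xiSigma_val]
    split_ifs <;> omega
  rcases key with hk | ⟨hz1, hk⟩
  · rw [show k.toOrderHom ((xiFace a 0).toOrderHom ((xiSigma a 0).toOrderHom z))
        = k.toOrderHom z from congrArg _ (Fin.ext hk)]
  · rw [show k.toOrderHom ((xiFace a 0).toOrderHom ((xiSigma a 0).toOrderHom z))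
        = k.toOrderHom (⟨0, by omega⟩ : Fin (a+3)) from congrArg _ (Fin.ext hk),
      show k.toOrderHom z = k.toOrderHom (⟨1, by omega⟩ : Fin (a+3)) from
        congrArg _ (Fin.ext hz1), h,
      show (⟨0, by omega⟩ : Fin (a+3)) = 0 from Fin.ext (by simp)]
    exact (hom_bot_val k).symm

/-- Factorization through the extra top codegeneracy. -/
lemma facTop {a : ℕ} {b : IntervalCat} (k : IntervalCat.mk (a+1) ⟶ b)
    (h : ((k.toOrderHom (⟨a+1, by omega⟩ : Fin (a+3)) : Fin (b.len + 2)) : ℕ)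
        = (k.toOrderHom (⟨a+2, by omega⟩ : Fin (a+3)) : ℕ)) :
    k = xiSigma a (a+1) ≫ (xiFace a a ≫ k) := by
  apply homext; intro z
  simp only [comp_toOrderHom_apply]
  have hz : (z : ℕ) < a + 3 := z.isLt
  have key : ((xiFace a a).toOrderHom ((xiSigma a (a+1)).toOrderHom z) : ℕ) = (z : ℕ)
      ∨ ((z : ℕ) = a+1 ∧ ((xiFace a a).toOrderHom ((xiSigma a (a+1)).toOrderHom z) : ℕ) = a+2) := by
    rw [xiFace_val, xiSigma_val]
    split_ifs <;> omega
  rcases key with hk | ⟨hz1, hk⟩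
  · rw [show k.toOrderHom ((xiFace a a).toOrderHom ((xiSigma a (a+1)).toOrderHom z))
        = k.toOrderHom z from congrArg _ (Fin.ext hk)]
  · rw [show k.toOrderHom ((xiFace a a).toOrderHom ((xiSigma a (a+1)).toOrderHom z))
        = k.toOrderHom (⟨a+2, by omega⟩ : Fin (a+3)) from congrArg _ (Fin.ext hk),
      show k.toOrderHom z = k.toOrderHom (⟨a+1, by omega⟩ : Fin (a+3)) from
        congrArg _ (Fin.ext hz1)]
    exact h

/-- Peeling a codegeneracy off a non-injective map (bottom-friendly section). -/
lemma peelB {p c : ℕ} {b : IntervalCat} (g : IntervalCat.mk (p+1) ⟶ b)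
    (hc : c + 1 ≤ p + 2)
    (hcc : ((g.toOrderHom (⟨c, by omega⟩ : Fin (p+3)) : Fin (b.len + 2)) : ℕ)
        = (g.toOrderHom (⟨c+1, by omega⟩ : Fin (p+3)) : ℕ)) :
    xiSigma p c ≫ (xiFace p (min c p) ≫ g) = g := by
  apply homext; intro z
  simp only [comp_toOrderHom_apply]
  have hz : (z : ℕ) < p + 3 := z.isLt
  have key : ((xiFace p (min c p)).toOrderHom ((xiSigma p c).toOrderHom z) : ℕ) = (z : ℕ)
      ∨ (((xiFace p (min c p)).toOrderHom ((xiSigma p c).toOrderHom z) : ℕ) = c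
          ∧ (z : ℕ) = c+1)
      ∨ (((xiFace p (min c p)).toOrderHom ((xiSigma p c).toOrderHom z) : ℕ) = c+1
          ∧ (z : ℕ) = c) := by
    rw [xiFace_val, xiSigma_val]
    split_ifs <;> omega
  rcases key with hk | ⟨hk, hz1⟩ | ⟨hk, hz1⟩
  · rw [show g.toOrderHom ((xiFace p (min c p)).toOrderHom ((xiSigma p c).toOrderHom z))
        = g.toOrderHom z from congrArg _ (Fin.ext hk)]
  · rw [show g.toOrderHom ((xiFace p (min c p)).toOrderHom ((xiSigma p c).toOrderHom z))
        = g.toOrderHom (⟨c, by omega⟩ : Fin (p+3)) from congrArg _ (Fin.ext hk),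
      show g.toOrderHom z = g.toOrderHom (⟨c+1, by omega⟩ : Fin (p+3)) from
        congrArg _ (Fin.ext hz1)]
    exact hcc
  · rw [show g.toOrderHom ((xiFace p (min c p)).toOrderHom ((xiSigma p c).toOrderHom z))
        = g.toOrderHom (⟨c+1, by omega⟩ : Fin (p+3)) from congrArg _ (Fin.ext hk),
      show g.toOrderHom z = g.toOrderHom (⟨c, by omega⟩ : Fin (p+3)) from
        congrArg _ (Fin.ext hz1)]
    exact hcc.symm

/-- Peeling a codegeneracy off a non-injective map (top-friendly section). -/
lemma peelT {p c : ℕ} {b : IntervalCat} (g : IntervalCat.mk (p+1) ⟶ b)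
    (hc : c + 1 ≤ p + 2)
    (hcc : ((g.toOrderHom (⟨c, by omega⟩ : Fin (p+3)) : Fin (b.len + 2)) : ℕ)
        = (g.toOrderHom (⟨c+1, by omega⟩ : Fin (p+3)) : ℕ)) :
    xiSigma p c ≫ (xiFace p (c - 1) ≫ g) = g := by
  apply homext; intro z
  simp only [comp_toOrderHom_apply]
  have hz : (z : ℕ) < p + 3 := z.isLt
  have key : ((xiFace p (c-1)).toOrderHom ((xiSigma p c).toOrderHom z) : ℕ) = (z : ℕ)
      ∨ (((xiFace p (c-1)).toOrderHom ((xiSigma p c).toOrderHom z) : ℕ) = c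
          ∧ (z : ℕ) = c+1)
      ∨ (((xiFace p (c-1)).toOrderHom ((xiSigma p c).toOrderHom z) : ℕ) = c+1
          ∧ (z : ℕ) = c) := by
    rw [xiFace_val, xiSigma_val]
    split_ifs <;> omega
  rcases key with hk | ⟨hk, hz1⟩ | ⟨hk, hz1⟩
  · rw [show g.toOrderHom ((xiFace p (c-1)).toOrderHom ((xiSigma p c).toOrderHom z))
        = g.toOrderHom z from congrArg _ (Fin.ext hk)]
  · rw [show g.toOrderHom ((xiFace p (c-1)).toOrderHom ((xiSigma p c).toOrderHom z))
        = g.toOrderHom (⟨c, by omega⟩ : Fin (p+3)) from congrArg _ (Fin.ext hk),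
      show g.toOrderHom z = g.toOrderHom (⟨c+1, by omega⟩ : Fin (p+3)) from
        congrArg _ (Fin.ext hz1)]
    exact hcc
  · rw [show g.toOrderHom ((xiFace p (c-1)).toOrderHom ((xiSigma p c).toOrderHom z))
        = g.toOrderHom (⟨c+1, by omega⟩ : Fin (p+3)) from congrArg _ (Fin.ext hk),
      show g.toOrderHom z = g.toOrderHom (⟨c, by omega⟩ : Fin (p+3)) from
        congrArg _ (Fin.ext hz1)]
    exact hcc.symm

/-- Removing a skipped interior value from an injective map. -/
def dropAt {p q : ℕ} (g : IntervalCat.mk p ⟶ IntervalCat.mk (q+1)) (s : ℕ)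
    (h1 : 1 ≤ s) (h2 : s ≤ q + 1)
    (hs : ∀ z, ((g.toOrderHom z : Fin (q+3)) : ℕ) ≠ s) :
    IntervalCat.mk p ⟶ IntervalCat.mk q where
  toOrderHom :=
    { toFun := fun z => ⟨if ((g.toOrderHom z : Fin (q+3)) : ℕ) < s
          then ((g.toOrderHom z : Fin (q+3)) : ℕ)
          else ((g.toOrderHom z : Fin (q+3)) : ℕ) - 1, by
        have h3 : ((g.toOrderHom z : Fin (q+3)) : ℕ) < q + 3 := (g.toOrderHom z).isLt
        have h4 := hs z
        dsimp only
        split <;> omega⟩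
      monotone' := by
        intro x y hxy
        have hmono : ((g.toOrderHom x : Fin (q+3)) : ℕ) ≤ (g.toOrderHom y : ℕ) :=
          g.toOrderHom.monotone hxy
        have hx := hs x
        have hy := hs y
        simp only [Fin.mk_le_mk]
        split_ifs <;> omega }
  map_bot := by
    apply Fin.ext
    have h0 : ((g.toOrderHom 0 : Fin (q+3)) : ℕ) = 0 := hom_bot_val g
    simp only [OrderHom.coe_mk]
    rw [h0, if_pos (by omega)]
    simp
  map_top := by
    apply Fin.ext
    have ht : ((g.toOrderHom (Fin.last (p+1)) : Fin (q+3)) : ℕ) = q + 2 := hom_top_val g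
    simp only [OrderHom.coe_mk]
    rw [ht, if_neg (by omega)]
    simp

lemma dropAt_val {p q : ℕ} (g : IntervalCat.mk p ⟶ IntervalCat.mk (q+1)) (s : ℕ)
    (h1 : 1 ≤ s) (h2 : s ≤ q + 1)
    (hs : ∀ z, ((g.toOrderHom z : Fin (q+3)) : ℕ) ≠ s) (z : Fin (p+2)) :
    ((dropAt g s h1 h2 hs).toOrderHom z : ℕ)
      = if ((g.toOrderHom z : Fin (q+3)) : ℕ) < s
          then ((g.toOrderHom z : Fin (q+3)) : ℕ)
          else ((g.toOrderHom z : Fin (q+3)) : ℕ) - 1 := rfl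

lemma dropAt_spec {p q : ℕ} (g : IntervalCat.mk p ⟶ IntervalCat.mk (q+1)) (s : ℕ)
    (h1 : 1 ≤ s) (h2 : s ≤ q + 1)
    (hs : ∀ z, ((g.toOrderHom z : Fin (q+3)) : ℕ) ≠ s) :
    dropAt g s h1 h2 hs ≫ xiFace q (s-1) = g := by
  apply homext; intro z
  have h3 : ((g.toOrderHom z : Fin (q+3)) : ℕ) < q + 3 := (g.toOrderHom z).isLt
  have h4 := hs z
  simp only [comp_toOrderHom_apply, xiFace_val, dropAt_val]
  split_ifs <;> omega

lemma exists_adj {n m : ℕ} (h : Fin (n+1) →o Fin m) (hni : ¬ Function.Injective h) :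
    ∃ c : ℕ, ∃ hc : c + 1 < n + 1, h ⟨c, by omega⟩ = h ⟨c + 1, hc⟩ := by
  rw [Function.Injective] at hni
  push_neg at hni
  obtain ⟨x, y, hxy, hne⟩ := hni
  have main : ∀ x y : Fin (n+1), x < y → h x = h y →
      ∃ c : ℕ, ∃ hc : c + 1 < n + 1, h ⟨c, by omega⟩ = h ⟨c + 1, hc⟩ := by
    intro x y hlt he
    have hy := y.isLt
    have hxv : (x : ℕ) < (y : ℕ) := hlt
    refine ⟨x.val, by omega, ?_⟩
    have e1 : (⟨x.val, by omega⟩ : Fin (n+1)) = x := by apply Fin.ext; rfl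
    rw [e1]
    apply le_antisymm
    · exact h.monotone (by rw [Fin.le_def]; simp)
    · have h2 : h ⟨x.val + 1, by omega⟩ ≤ h y :=
        h.monotone (by rw [Fin.le_def]; simpa using hxv)
      rw [← he] at h2
      exact h2
  rcases hne.lt_or_gt with hlt | hlt
  · exact main x y hlt hxy
  · exact main y x hlt hxy.symm

lemma idOfBij {n : ℕ} (h : Fin n →o Fin n) (hi : Function.Injective h)
    (hsurj : Function.Surjective h) (z : Fin n) : h z = z := by
  have sm : StrictMono h := h.monotone.strictMono_of_injective hi
  have : ⇑h = id := (sm.range_inj strictMono_id).1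
    (by rw [Set.range_id, Set.range_eq_univ]; exact hsurj)
  exact congrFun this z

lemma xiSec0 (t : ℕ) : xiFace t 0 ≫ xiSigma t 0 = 𝟙 (IntervalCat.mk t) := by
  have := xiSec t 0
  rwa [Nat.zero_min] at this

lemma xiSecTop (t : ℕ) :
    xiFace (t+1) (t+1) ≫ xiSigma (t+1) (t+2) = 𝟙 (IntervalCat.mk (t+1)) := by
  have := xiSec' (t+1) (t+2)
  rwa [show t + 2 - 1 = t + 1 by omega] at this

/-- The composite `ν : ⟨t+2⟩ → ⟨t⟩` collapsing both endpoint pairs. -/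
def nuH (t : ℕ) : IntervalCat.mk (t+2) ⟶ IntervalCat.mk t :=
  xiSigma (t+1) (t+2) ≫ xiSigma t 0

/-- The canonical section of `nuH`. -/
def deH (t : ℕ) : IntervalCat.mk t ⟶ IntervalCat.mk (t+2) :=
  xiFace t 0 ≫ xiFace (t+1) (t+1)

lemma deH_nuH (t : ℕ) : deH t ≫ nuH t = 𝟙 (IntervalCat.mk t) := by
  rw [deH, nuH]
  rw [Category.assoc, ← Category.assoc (xiFace (t+1) (t+1))]
  rw [xiSecTop t, Category.id_comp]
  exact xiSec0 t

section WithPresheaf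

variable (A : IntervalCatᵒᵖ ⥤ Type)

/-- Contravariant action of `A` on a morphism of `Ξ`. -/
def am {a b : IntervalCat} (f : a ⟶ b) : A.obj (op b) → A.obj (op a) := A.map f.op

lemma am_comp {a b c : IntervalCat} (f : a ⟶ b) (g : b ⟶ c) (u : A.obj (op c)) :
    am A (f ≫ g) u = am A f (am A g u) := by
  show A.map ((f ≫ g).op) u = (A.map g.op ≫ A.map f.op) u
  rw [← A.map_comp]
  rfl

lemma am_id {a : IntervalCat} (u : A.obj (op a)) : am A (𝟙 a) u = u := by
  show A.map (𝟙 (op a)) u = u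
  rw [A.map_id]
  rfl

/-- Flanked transfer, bottom: if the interior-top face of `u` is bottom-degenerate,
so is `u`. -/
lemma flankBot (hA : Flanked A) (t : ℕ) (u : A.obj (op (IntervalCat.mk (t+2))))
    (h : ∃ v, am A (xiFace (t+1) (t+1)) u = am A (xiSigma t 0) v) :
    ∃ w, u = am A (xiSigma (t+1) 0) w := by
  obtain ⟨v, hv⟩ := h
  have hP := (hA t).1
  have comm : TypeCat.ofHom (fun _ : PUnit => v) ≫ A.map (xiSigma t 0).op
      = TypeCat.ofHom (fun _ : PUnit => u) ≫ A.map (xiFace (t+1) (t+1)).op := by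
    ext z
    exact hv.symm
  refine ⟨hP.lift (TypeCat.ofHom (fun _ : PUnit => v)) (TypeCat.ofHom (fun _ : PUnit => u)) comm PUnit.unit, ?_⟩
  exact (ConcreteCategory.congr_hom (hP.lift_snd (TypeCat.ofHom (fun _ : PUnit => v)) (TypeCat.ofHom (fun _ : PUnit => u)) comm)
    PUnit.unit).symm

/-- Flanked transfer, top: if the interior-bottom face of `u` is top-degenerate,
so is `u`. -/
lemma flankTop (hA : Flanked A) (t : ℕ) (u : A.obj (op (IntervalCat.mk (t+2))))
    (h : ∃ v, am A (xiFace (t+1) 0) u = am A (xiSigma t (t+1)) v) :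
    ∃ w, u = am A (xiSigma (t+1) (t+2)) w := by
  obtain ⟨v, hv⟩ := h
  have hP := (hA t).2
  have comm : TypeCat.ofHom (fun _ : PUnit => v) ≫ A.map (xiSigma t (t+1)).op
      = TypeCat.ofHom (fun _ : PUnit => u) ≫ A.map (xiFace (t+1) 0).op := by
    ext z
    exact hv.symm
  refine ⟨hP.lift (TypeCat.ofHom (fun _ : PUnit => v)) (TypeCat.ofHom (fun _ : PUnit => u)) comm PUnit.unit, ?_⟩
  exact (ConcreteCategory.congr_hom (hP.lift_snd (TypeCat.ofHom (fun _ : PUnit => v)) (TypeCat.ofHom (fun _ : PUnit => u)) comm)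
    PUnit.unit).symm

lemma skipBot (hA : Flanked A) :
    ∀ (t i : ℕ), 1 ≤ i → i ≤ t + 1 → ∀ u : A.obj (op (IntervalCat.mk (t+2))),
    (∃ v, am A (xiFace (t+1) i) u = am A (xiSigma t 0) v) →
    ∃ w, u = am A (xiSigma (t+1) 0) w := by
  intro t
  induction t with
  | zero =>
    intro i h1 h2 u hu
    have : i = 1 := by omega
    subst this
    exact flankBot A hA 0 u hu
  | succ r ih =>
    intro i h1 h2 u hu
    by_cases hi : i = r + 2
    · subst hi
      exact flankBot A hA (r+1) u hu
    · have hir : i ≤ r + 1 := by omega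
      obtain ⟨v, hv⟩ := hu
      apply flankBot A hA (r+1) u
      apply ih i h1 hir
      refine ⟨am A (xiFace r r) v, ?_⟩
      calc am A (xiFace (r+1) i) (am A (xiFace (r+2) (r+2)) u)
          = am A (xiFace (r+1) i ≫ xiFace (r+2) (r+2)) u := (am_comp A _ _ u).symm
        _ = am A (xiFace (r+1) (r+1) ≫ xiFace (r+2) i) u := by rw [xiE1 (r+1) i hir]
        _ = am A (xiFace (r+1) (r+1)) (am A (xiFace (r+2) i) u) := am_comp A _ _ u
        _ = am A (xiFace (r+1) (r+1)) (am A (xiSigma (r+1) 0) v) := by rw [hv]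
        _ = am A (xiFace (r+1) (r+1) ≫ xiSigma (r+1) 0) v := (am_comp A _ _ v).symm
        _ = am A (xiSigma r 0 ≫ xiFace r r) v := by rw [xiE5 r]
        _ = am A (xiSigma r 0) (am A (xiFace r r) v) := am_comp A _ _ v

lemma skipTop (hA : Flanked A) :
    ∀ (t i : ℕ), i ≤ t → ∀ u : A.obj (op (IntervalCat.mk (t+2))),
    (∃ v, am A (xiFace (t+1) i) u = am A (xiSigma t (t+1)) v) →
    ∃ w, u = am A (xiSigma (t+1) (t+2)) w := by
  intro t
  induction t with
  | zero =>
    intro i h2 u hu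
    have : i = 0 := by omega
    subst this
    exact flankTop A hA 0 u hu
  | succ r ih =>
    intro i h2 u hu
    by_cases hi : i = 0
    · subst hi
      exact flankTop A hA (r+1) u hu
    · obtain ⟨j, rfl⟩ : ∃ j, i = j + 1 := ⟨i - 1, by omega⟩
      have hjr : j ≤ r := by omega
      obtain ⟨v, hv⟩ := hu
      apply flankTop A hA (r+1) u
      apply ih j hjr
      refine ⟨am A (xiFace r 0) v, ?_⟩
      calc am A (xiFace (r+1) j) (am A (xiFace (r+2) 0) u)
          = am A (xiFace (r+1) j ≫ xiFace (r+2) 0) u := (am_comp A _ _ u).symm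
        _ = am A (xiFace (r+1) 0 ≫ xiFace (r+2) (j+1)) u := by rw [xiE2 (r+1) j (by omega)]
        _ = am A (xiFace (r+1) 0) (am A (xiFace (r+2) (j+1)) u) := am_comp A _ _ u
        _ = am A (xiFace (r+1) 0) (am A (xiSigma (r+1) (r+2)) v) := by rw [hv]
        _ = am A (xiFace (r+1) 0 ≫ xiSigma (r+1) (r+2)) v := (am_comp A _ _ v).symm
        _ = am A (xiSigma r (r+1) ≫ xiFace r 0) v := by rw [xiE6 r]
        _ = am A (xiSigma r (r+1)) (am A (xiFace r 0) v) := am_comp A _ _ v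



lemma condKtop (r c : ℕ) (hcp : c ≤ r+1) :
    (((xiFace (r+1) (c-1) ≫ xiSigma (r+1) (r+1+1)).toOrderHom
        (⟨r+1, by omega⟩ : Fin (r+3)) : Fin (r+3)) : ℕ)
        = ((xiFace (r+1) (c-1) ≫ xiSigma (r+1) (r+1+1)).toOrderHom
        (⟨r+2, by omega⟩ : Fin (r+3)) : ℕ) := by
  simp only [comp_toOrderHom_apply]
  rw [xiSigma_val, xiFace_val, xiSigma_val, xiFace_val,
    show ((⟨r+1, by omega⟩ : Fin (r+3)) : ℕ) = r+1 from rfl,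
    show ((⟨r+2, by omega⟩ : Fin (r+3)) : ℕ) = r+2 from rfl]
  split_ifs <;> omega

lemma condComp1 (r c q : ℕ) (g : IntervalCat.mk (r+1+1) ⟶ IntervalCat.mk (q+1)) (hc1 : 1 ≤ c)
    (hg : ((g.toOrderHom (⟨1, by omega⟩ : Fin (r+1+3)) : Fin (q+3)) : ℕ) = 1) :
    (((xiFace (r+1) (min c (r+1)) ≫ g).toOrderHom
        (⟨1, by omega⟩ : Fin (r+3)) : Fin (q+3)) : ℕ) = 1 := by
  simp only [comp_toOrderHom_apply]
  rw [show (xiFace (r+1) (min c (r+1))).toOrderHom (⟨1, by omega⟩ : Fin (r+3))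
      = (⟨1, by omega⟩ : Fin (r+1+3)) from Fin.ext (by
        rw [xiFace_val, show ((⟨1, by omega⟩ : Fin (r+3)) : ℕ) = 1 from rfl,
          if_pos (by omega)])]
  exact hg

lemma condComp2 (r c q : ℕ) (g : IntervalCat.mk (r+1+1) ⟶ IntervalCat.mk (q+1)) (hcp : c ≤ r+1)
    (hg : ((g.toOrderHom (⟨r+1+1, by omega⟩ : Fin (r+1+3)) : Fin (q+3)) : ℕ) = q + 1) :
    (((xiFace (r+1) (c-1) ≫ g).toOrderHom
        (⟨r+1, by omega⟩ : Fin (r+3)) : Fin (q+3)) : ℕ) = q + 1 := by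
  simp only [comp_toOrderHom_apply]
  rw [show (xiFace (r+1) (c-1)).toOrderHom (⟨r+1, by omega⟩ : Fin (r+3))
      = (⟨r+1+1, by omega⟩ : Fin (r+1+3)) from Fin.ext (by
        rw [xiFace_val, show ((⟨r+1, by omega⟩ : Fin (r+3)) : ℕ) = r+1 from rfl,
          if_neg (by omega)])]
  exact hg

set_option maxHeartbeats 1000000 in
lemma reflBot (hA : Flanked A) :
    ∀ (M p q : ℕ) (g : IntervalCat.mk (p+1) ⟶ IntervalCat.mk (q+1)), p + q = M →
    ((g.toOrderHom (⟨1, by omega⟩ : Fin (p+3)) : Fin (q+3)) : ℕ) = 1 →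
    ∀ u : A.obj (op (IntervalCat.mk (q+1))),
    (∃ v, am A g u = am A (xiSigma p 0) v) →
    ∃ w, u = am A (xiSigma q 0) w := by
  intro M
  induction M using Nat.strong_induction_on with
  | _ M ih =>
  intro p q g hM hg u hu
  have hbot : ((g.toOrderHom 0 : Fin (q+3)) : ℕ) = 0 := hom_bot_val g
  have htop : ((g.toOrderHom (Fin.last (p+2)) : Fin (q+3)) : ℕ) = q + 2 := hom_top_val g
  by_cases hinj : Function.Injective g.toOrderHom
  · by_cases hsurj : Function.Surjective g.toOrderHom
    · -- bijective case
      have hcard : p + 3 ≤ q + 3 := by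
        simpa using Fintype.card_le_of_injective _ hinj
      have hcard2 : q + 3 ≤ p + 3 := by
        simpa using Fintype.card_le_of_surjective _ hsurj
      have hpq : p = q := by omega
      subst hpq
      have hgid : g = 𝟙 (IntervalCat.mk (p+1)) := by
        apply homext; intro z
        rw [idOfBij g.toOrderHom hinj hsurj z]
        rfl
      obtain ⟨v, hv⟩ := hu
      rw [hgid, am_id] at hv
      exact ⟨v, hv⟩
    · -- injective, not surjective
      rw [Function.Surjective] at hsurj
      push_neg at hsurj
      obtain ⟨s0, hs0⟩ := hsurj
      have hs : ∀ z, ((g.toOrderHom z : Fin (q+3)) : ℕ) ≠ (s0 : ℕ) := by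
        intro z hz
        exact hs0 z (Fin.ext hz)
      have hsl : (s0 : ℕ) < q + 3 := s0.isLt
      have hs2 : 2 ≤ (s0 : ℕ) := by
        have e0 := hs 0
        have e1 := hs (⟨1, by omega⟩ : Fin (p+3))
        rw [hbot] at e0
        rw [hg] at e1
        omega
      have hsq : (s0 : ℕ) ≤ q + 1 := by
        have e2 := hs (Fin.last (p+2))
        rw [htop] at e2
        omega
      obtain ⟨t, rfl⟩ : ∃ t, q = t + 1 := ⟨q - 1, by omega⟩
      obtain ⟨v, hv⟩ := hu
      have hstep : am A (dropAt g (s0 : ℕ) (by omega) (by omega) hs)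
          (am A (xiFace (t+1) ((s0 : ℕ)-1)) u) = am A (xiSigma p 0) v := by
        rw [← am_comp, dropAt_spec g (s0 : ℕ) (by omega) (by omega) hs]
        exact hv
      have hone : (((dropAt g (s0 : ℕ) (by omega) (by omega) hs).toOrderHom
          (⟨1, by omega⟩ : Fin (p+3)) : Fin (t+3)) : ℕ) = 1 := by
        rw [dropAt_val, hg, if_pos (by omega)]
      have h1 := ih (p + t) (by omega) p t
        (dropAt g (s0 : ℕ) (by omega) (by omega) hs) rfl hone
        (am A (xiFace (t+1) ((s0 : ℕ)-1)) u) ⟨v, hstep⟩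
      exact skipBot A hA t ((s0 : ℕ)-1) (by omega) (by omega) u h1
  · -- not injective
    obtain ⟨c, hcb, hcc⟩ := exists_adj g.toOrderHom hinj
    have hcb' : c + 1 < p + 3 := hcb
    have hccv : ((g.toOrderHom (⟨c, by omega⟩ : Fin (p+3)) : Fin (q+3)) : ℕ)
        = (g.toOrderHom (⟨c+1, by omega⟩ : Fin (p+3)) : ℕ) := congrArg Fin.val hcc
    have hzero : ((g.toOrderHom (⟨0, by omega⟩ : Fin (p+3)) : Fin (q+3)) : ℕ) = 0 := by
      rw [show (⟨0, by omega⟩ : Fin (p+3)) = 0 from Fin.ext (by simp)]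
      exact hbot
    have hc1 : 1 ≤ c := by
      by_contra hcz
      push_neg at hcz
      have hc0 : c = 0 := by omega
      subst hc0
      have h11 : ((g.toOrderHom (⟨0+1, by omega⟩ : Fin (p+3)) : Fin (q+3)) : ℕ) = 1 := hg
      rw [hzero, h11] at hccv
      omega
    have hp1 : 1 ≤ p := by
      by_contra hpz
      push_neg at hpz
      have hp0 : p = 0 := by omega
      subst hp0
      have hc2 : c = 1 := by omega
      subst hc2
      have h2 : ((g.toOrderHom (⟨1+1, by omega⟩ : Fin (0+3)) : Fin (q+3)) : ℕ) = q + 2 := htop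
      rw [hg, h2] at hccv
      omega
    obtain ⟨r, rfl⟩ : ∃ r, p = r + 1 := ⟨p - 1, by omega⟩
    have hpeel : xiSigma (r+1) c ≫ (xiFace (r+1) (min c (r+1)) ≫ g) = g :=
      peelB g (by omega) hccv
    obtain ⟨v, hv⟩ := hu
    have h1 : am A (xiSigma (r+1) c) (am A (xiFace (r+1) (min c (r+1)) ≫ g) u)
        = am A (xiSigma (r+1) 0) v := by
      rw [← am_comp, hpeel]
      exact hv
    have hKbot : (((xiFace (r+1) (min c (r+1)) ≫ xiSigma (r+1) 0).toOrderHom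
        (⟨1, by omega⟩ : Fin (r+3)) : Fin (r+3)) : ℕ) = 0 := by
      simp only [comp_toOrderHom_apply]
      rw [xiSigma_val, xiFace_val,
        show ((⟨1, by omega⟩ : Fin (r+3)) : ℕ) = 1 from rfl]
      split_ifs <;> omega
    have hfac := facBot (xiFace (r+1) (min c (r+1)) ≫ xiSigma (r+1) 0) hKbot
    have hwform : am A (xiFace (r+1) (min c (r+1)) ≫ g) u
        = am A (xiSigma r 0) (am A (xiFace r 0
            ≫ (xiFace (r+1) (min c (r+1)) ≫ xiSigma (r+1) 0)) v) := by
      calc am A (xiFace (r+1) (min c (r+1)) ≫ g) u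
          = am A ((xiFace (r+1) (min c (r+1)) ≫ xiSigma (r+1) c)
              ≫ (xiFace (r+1) (min c (r+1)) ≫ g)) u := by
            rw [xiSec (r+1) c, Category.id_comp]
        _ = am A (xiFace (r+1) (min c (r+1)) ≫ xiSigma (r+1) c)
              (am A (xiFace (r+1) (min c (r+1)) ≫ g) u) := am_comp A _ _ u
        _ = am A (xiFace (r+1) (min c (r+1)))
              (am A (xiSigma (r+1) c) (am A (xiFace (r+1) (min c (r+1)) ≫ g) u)) :=
            am_comp A _ _ _
        _ = am A (xiFace (r+1) (min c (r+1))) (am A (xiSigma (r+1) 0) v) := by rw [h1]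
        _ = am A (xiFace (r+1) (min c (r+1)) ≫ xiSigma (r+1) 0) v := (am_comp A _ _ v).symm
        _ = am A (xiSigma r 0 ≫ (xiFace r 0
              ≫ (xiFace (r+1) (min c (r+1)) ≫ xiSigma (r+1) 0))) v := by rw [← hfac]
        _ = am A (xiSigma r 0) (am A (xiFace r 0
              ≫ (xiFace (r+1) (min c (r+1)) ≫ xiSigma (r+1) 0)) v) := am_comp A _ _ v
    have hg' := condComp1 r c q g hc1 hg
    exact ih (r + q) (by omega) r q (xiFace (r+1) (min c (r+1)) ≫ g) rfl hg' u ⟨_, hwform⟩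

set_option maxHeartbeats 1000000 in
lemma reflTop (hA : Flanked A) :
    ∀ (M p q : ℕ) (g : IntervalCat.mk (p+1) ⟶ IntervalCat.mk (q+1)), p + q = M →
    ((g.toOrderHom (⟨p+1, by omega⟩ : Fin (p+3)) : Fin (q+3)) : ℕ) = q + 1 →
    ∀ u : A.obj (op (IntervalCat.mk (q+1))),
    (∃ v, am A g u = am A (xiSigma p (p+1)) v) →
    ∃ w, u = am A (xiSigma q (q+1)) w := by
  intro M
  induction M using Nat.strong_induction_on with
  | _ M ih =>
  intro p q g hM hg u hu
  have hbot : ((g.toOrderHom 0 : Fin (q+3)) : ℕ) = 0 := hom_bot_val g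
  have htop : ((g.toOrderHom (Fin.last (p+2)) : Fin (q+3)) : ℕ) = q + 2 := hom_top_val g
  by_cases hinj : Function.Injective g.toOrderHom
  · by_cases hsurj : Function.Surjective g.toOrderHom
    · -- bijective case
      have hcard : p + 3 ≤ q + 3 := by
        simpa using Fintype.card_le_of_injective _ hinj
      have hcard2 : q + 3 ≤ p + 3 := by
        simpa using Fintype.card_le_of_surjective _ hsurj
      have hpq : p = q := by omega
      subst hpq
      have hgid : g = 𝟙 (IntervalCat.mk (p+1)) := by
        apply homext; intro z
        rw [idOfBij g.toOrderHom hinj hsurj z]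
        rfl
      obtain ⟨v, hv⟩ := hu
      rw [hgid, am_id] at hv
      exact ⟨v, hv⟩
    · -- injective, not surjective
      rw [Function.Surjective] at hsurj
      push_neg at hsurj
      obtain ⟨s0, hs0⟩ := hsurj
      have hs : ∀ z, ((g.toOrderHom z : Fin (q+3)) : ℕ) ≠ (s0 : ℕ) := by
        intro z hz
        exact hs0 z (Fin.ext hz)
      have hsl : (s0 : ℕ) < q + 3 := s0.isLt
      have hs1 : 1 ≤ (s0 : ℕ) := by
        have e0 := hs 0
        rw [hbot] at e0
        omega
      have hsq : (s0 : ℕ) ≤ q := by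
        have e1 := hs (⟨p+1, by omega⟩ : Fin (p+3))
        have e2 := hs (Fin.last (p+2))
        rw [hg] at e1
        rw [htop] at e2
        omega
      obtain ⟨t, rfl⟩ : ∃ t, q = t + 1 := ⟨q - 1, by omega⟩
      obtain ⟨v, hv⟩ := hu
      have hstep : am A (dropAt g (s0 : ℕ) (by omega) (by omega) hs)
          (am A (xiFace (t+1) ((s0 : ℕ)-1)) u) = am A (xiSigma p (p+1)) v := by
        rw [← am_comp, dropAt_spec g (s0 : ℕ) (by omega) (by omega) hs]
        exact hv
      have hone : (((dropAt g (s0 : ℕ) (by omega) (by omega) hs).toOrderHom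
          (⟨p+1, by omega⟩ : Fin (p+3)) : Fin (t+3)) : ℕ) = t + 1 := by
        rw [dropAt_val, hg, if_neg (by omega)]
        omega
      have h1 := ih (p + t) (by omega) p t
        (dropAt g (s0 : ℕ) (by omega) (by omega) hs) rfl hone
        (am A (xiFace (t+1) ((s0 : ℕ)-1)) u) ⟨v, hstep⟩
      exact skipTop A hA t ((s0 : ℕ)-1) (by omega) u h1
  · -- not injective
    obtain ⟨c, hcb, hcc⟩ := exists_adj g.toOrderHom hinj
    have hcb' : c + 1 < p + 3 := hcb
    have hccv : ((g.toOrderHom (⟨c, by omega⟩ : Fin (p+3)) : Fin (q+3)) : ℕ)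
        = (g.toOrderHom (⟨c+1, by omega⟩ : Fin (p+3)) : ℕ) := congrArg Fin.val hcc
    have hzero : ((g.toOrderHom (⟨0, by omega⟩ : Fin (p+3)) : Fin (q+3)) : ℕ) = 0 := by
      rw [show (⟨0, by omega⟩ : Fin (p+3)) = 0 from Fin.ext (by simp)]
      exact hbot
    have hcp : c ≤ p := by
      by_contra hgt
      push_neg at hgt
      have hce : c = p + 1 := by omega
      subst hce
      have h2 : ((g.toOrderHom (⟨p+1+1, by omega⟩ : Fin (p+3)) : Fin (q+3)) : ℕ) = q + 2 := htop
      have hne : q + 1 = q + 2 := by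
        rw [← hg, ← h2]
        exact hccv
      omega
    have hp1 : 1 ≤ p := by
      by_contra hpz
      push_neg at hpz
      have hp0 : p = 0 := by omega
      subst hp0
      have hc0 : c = 0 := by omega
      subst hc0
      have h11 : ((g.toOrderHom (⟨0+1, by omega⟩ : Fin (0+3)) : Fin (q+3)) : ℕ) = q + 1 := hg
      rw [hzero, h11] at hccv
      omega
    obtain ⟨r, rfl⟩ : ∃ r, p = r + 1 := ⟨p - 1, by omega⟩
    have hpeel : xiSigma (r+1) c ≫ (xiFace (r+1) (c-1) ≫ g) = g :=
      peelT g (by omega) hccv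
    obtain ⟨v, hv⟩ := hu
    have h1 : am A (xiSigma (r+1) c) (am A (xiFace (r+1) (c-1) ≫ g) u)
        = am A (xiSigma (r+1) (r+1+1)) v := by
      rw [← am_comp, hpeel]
      exact hv
    have hKtop := condKtop r c hcp
    have hfac := facTop (xiFace (r+1) (c-1) ≫ xiSigma (r+1) (r+1+1)) hKtop
    have hwform : am A (xiFace (r+1) (c-1) ≫ g) u
        = am A (xiSigma r (r+1)) (am A (xiFace r r
            ≫ (xiFace (r+1) (c-1) ≫ xiSigma (r+1) (r+1+1))) v) := by
      calc am A (xiFace (r+1) (c-1) ≫ g) u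
          = am A ((xiFace (r+1) (c-1) ≫ xiSigma (r+1) c)
              ≫ (xiFace (r+1) (c-1) ≫ g)) u := by
            rw [xiSec' (r+1) c, Category.id_comp]
        _ = am A (xiFace (r+1) (c-1) ≫ xiSigma (r+1) c)
              (am A (xiFace (r+1) (c-1) ≫ g) u) := am_comp A _ _ u
        _ = am A (xiFace (r+1) (c-1))
              (am A (xiSigma (r+1) c) (am A (xiFace (r+1) (c-1) ≫ g) u)) :=
            am_comp A _ _ _
        _ = am A (xiFace (r+1) (c-1)) (am A (xiSigma (r+1) (r+1+1)) v) := by rw [h1]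
        _ = am A (xiFace (r+1) (c-1) ≫ xiSigma (r+1) (r+1+1)) v := (am_comp A _ _ v).symm
        _ = am A (xiSigma r (r+1) ≫ (xiFace r r
              ≫ (xiFace (r+1) (c-1) ≫ xiSigma (r+1) (r+1+1)))) v := by rw [← hfac]
        _ = am A (xiSigma r (r+1)) (am A (xiFace r r
              ≫ (xiFace (r+1) (c-1) ≫ xiSigma (r+1) (r+1+1))) v) := am_comp A _ _ v
    have hg' := condComp2 r c q g hcp hg
    exact ih (r + q) (by omega) r q (xiFace (r+1) (c-1) ≫ g) rfl hg' u ⟨_, hwform⟩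

lemma combineDeg (n : ℕ) (w : A.obj (op (IntervalCat.mk (n+2))))
    (h1 : ∃ v, w = am A (xiSigma (n+1) 0) v)
    (h2 : ∃ v, w = am A (xiSigma (n+1) (n+2)) v) :
    ∃ r, w = am A (nuH n) r := by
  obtain ⟨v1, e1⟩ := h1
  obtain ⟨v2, e2⟩ := h2
  have hv1 : v1 = am A (xiSigma n (n+1)) (am A (xiFace n 0) v2) := by
    calc v1 = am A (xiFace (n+1) 0 ≫ xiSigma (n+1) 0) v1 := by rw [xiSec0 (n+1), am_id]
      _ = am A (xiFace (n+1) 0) (am A (xiSigma (n+1) 0) v1) := am_comp A _ _ v1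
      _ = am A (xiFace (n+1) 0) w := by rw [← e1]
      _ = am A (xiFace (n+1) 0) (am A (xiSigma (n+1) (n+2)) v2) := by rw [e2]
      _ = am A (xiFace (n+1) 0 ≫ xiSigma (n+1) (n+2)) v2 := (am_comp A _ _ v2).symm
      _ = am A (xiSigma n (n+1) ≫ xiFace n 0) v2 := by rw [xiE6 n]
      _ = am A (xiSigma n (n+1)) (am A (xiFace n 0) v2) := am_comp A _ _ v2
  refine ⟨am A (xiFace n 0) v2, ?_⟩
  calc w = am A (xiSigma (n+1) 0) v1 := e1
    _ = am A (xiSigma (n+1) 0) (am A (xiSigma n (n+1)) (am A (xiFace n 0) v2)) := by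
        rw [← hv1]
    _ = am A (xiSigma (n+1) 0 ≫ xiSigma n (n+1)) (am A (xiFace n 0) v2) :=
        (am_comp A _ _ _).symm
    _ = am A (nuH n) (am A (xiFace n 0) v2) := by rw [nuH, xiE0 n]

end WithPresheaf

lemma condGbot {b a : IntervalCat} (f : b ⟶ a) :
    (((iF.map (uF.map f)).toOrderHom (⟨1, by omega⟩ : Fin (b.len+4)) : Fin (a.len+4)) : ℕ)
      = 1 := by
  show ((iObjMap f.toOrderHom) (⟨1, by omega⟩ : Fin (b.len+4)) : ℕ) = 1
  rw [iObjMap_val]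
  simp only [Fin.val_mk]
  rw [if_neg (by omega), dif_neg (by omega),
    show (⟨1-1, by omega⟩ : Fin (b.len+2)) = 0 from Fin.ext (by simp),
    hom_bot_val f]

lemma condGtop {b a : IntervalCat} (f : b ⟶ a) :
    (((iF.map (uF.map f)).toOrderHom (⟨b.len+2, by omega⟩ : Fin (b.len+4)) : Fin (a.len+4)) : ℕ)
      = a.len + 2 := by
  show ((iObjMap f.toOrderHom) (⟨b.len+2, by omega⟩ : Fin (b.len+4)) : ℕ) = a.len + 2
  rw [iObjMap_val]
  simp only [Fin.val_mk]
  rw [if_neg (by omega), dif_neg (by omega),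
    show (⟨b.len+2-1, by omega⟩ : Fin (b.len+2)) = Fin.last (b.len+1) from rfl,
    hom_top_val f]

section WithPresheaf2

variable (A : IntervalCatᵒᵖ ⥤ Type)

lemma etaApp (t : ℕ) (u : A.obj (op (IntervalCat.mk t))) :
    (unitNT A).app (op (IntervalCat.mk t)) u = am A (nuH t) u := by
  show (A.map (xiSigma t 0).op ≫ A.map (xiSigma (t+1) (t+2)).op) u
      = A.map (nuH t).op u
  rw [nuH, op_comp, A.map_comp]

lemma keyFix (hA : Flanked A) {m n : ℕ} (f : IntervalCat.mk m ⟶ IntervalCat.mk n)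
    (w0 : A.obj (op (IntervalCat.mk (n+2)))) (y : A.obj (op (IntervalCat.mk m)))
    (hc : am A (iF.map (uF.map f)) w0 = am A (nuH m) y) :
    am A (nuH n) (am A (deH n) w0) = w0 := by
  have hbot : ∃ w1, w0 = am A (xiSigma (n+1) 0) w1 := by
    apply reflBot A hA ((m+1)+(n+1)) (m+1) (n+1) (iF.map (uF.map f)) rfl (condGbot f) w0
    refine ⟨am A (xiSigma m (m+1)) y, ?_⟩
    refine hc.trans ?_
    calc am A (nuH m) y
        = am A (xiSigma (m+1) 0 ≫ xiSigma m (m+1)) y := by rw [nuH, xiE0 m]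
      _ = am A (xiSigma (m+1) 0) (am A (xiSigma m (m+1)) y) := am_comp A _ _ y
  have htop : ∃ w2, w0 = am A (xiSigma (n+1) (n+2)) w2 := by
    apply reflTop A hA ((m+1)+(n+1)) (m+1) (n+1) (iF.map (uF.map f)) rfl (condGtop f) w0
    refine ⟨am A (xiSigma m 0) y, ?_⟩
    refine hc.trans ?_
    rw [nuH]
    exact am_comp A _ _ y
  obtain ⟨r, hr⟩ := combineDeg A n w0 hbot htop
  rw [hr, ← am_comp A (deH n) (nuH n), deH_nuH, am_id]

end WithPresheaf2



end UnitCartesianAux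

/-- for `A` a flanked presheaf on `Ξ`, the unit `η_A : A ⟶ u*i*A` is a
cartesian map of presheaves on `Ξ`. -/
theorem unit_cartesian (A : IntervalCatᵒᵖ ⥤ Type) (hA : Flanked A) :
    IsCartesianXi (unitNT A) := by
  intro c c' φ
  obtain ⟨a⟩ := c
  obtain ⟨b⟩ := c'
  obtain ⟨n⟩ := a
  obtain ⟨m⟩ := b
  have w : (unitNT A).app (op (IntervalCat.mk n)) ≫ (uStar (iStar A)).map φ
      = A.map φ ≫ (unitNT A).app (op (IntervalCat.mk m)) := ((unitNT A).naturality φ).symm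
  have hcond : ∀ (s : Limits.PullbackCone ((uStar (iStar A)).map φ)
      ((unitNT A).app (op (IntervalCat.mk m)))) (z : s.pt),
      am A (iF.map (uF.map φ.unop)) (s.fst z) = am A (nuH m) (s.snd z) := by
    intro s z
    have h := ConcreteCategory.congr_hom s.condition z
    simp only [types_comp_apply] at h
    rw [etaApp] at h
    exact h
  have hkey : ∀ (s : Limits.PullbackCone ((uStar (iStar A)).map φ)
      ((unitNT A).app (op (IntervalCat.mk m)))) (z : s.pt),
      am A (nuH n) (am A (deH n) (s.fst z)) = s.fst z := by
    intro s z
    exact keyFix A hA φ.unop (s.fst z) (s.snd z) (hcond s z)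
  refine IsPullback.of_isLimit (Limits.PullbackCone.IsLimit.mk w
    (fun s => TypeCat.ofHom fun z => am A (deH n) (s.fst z)) ?_ ?_ ?_)
  · intro s
    ext z
    show (unitNT A).app (op (IntervalCat.mk n)) (am A (deH n) (s.fst z)) = s.fst z
    rw [etaApp]
    exact hkey s z
  · intro s
    ext z
    show A.map φ (am A (deH n) (s.fst z)) = s.snd z
    have hinj : ∀ x y : A.obj (op (IntervalCat.mk m)),
        am A (nuH m) x = am A (nuH m) y → x = y := by
      intro x y hxy
      have h2 := congrArg (am A (deH m)) hxy
      rwa [← am_comp, ← am_comp, deH_nuH, am_id, am_id] at h2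
    apply hinj
    have hnat : nuH m ≫ φ.unop = iF.map (uF.map φ.unop) ≫ nuH n := nu_natural φ.unop
    calc am A (nuH m) (A.map φ (am A (deH n) (s.fst z)))
        = am A (nuH m) (am A φ.unop (am A (deH n) (s.fst z))) := rfl
      _ = am A (nuH m ≫ φ.unop) (am A (deH n) (s.fst z)) := (am_comp A _ _ _).symm
      _ = am A (nuH m) (s.snd z) := by
          rw [hnat]
          refine (am_comp A (iF.map (uF.map φ.unop)) (nuH n) _).trans ?_
          refine (congrArg (am A (iF.map (uF.map φ.unop))) (hkey s z)).trans ?_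
          exact hcond s z
  · intro s mm h1 _
    ext z
    have h2 := ConcreteCategory.congr_hom h1 z
    simp only [Limits.PullbackCone.mk_fst, types_comp_apply] at h2
    show mm z = am A (deH n) (s.fst z)
    rw [← h2, etaApp, ← am_comp A (deH n) (nuH n), deH_nuH, am_id]

end DS3
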